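/- Let f : Finset V → ℝ be a monotone submodular set function with f(∅) = 0 on a finite type V, and let OPT(k) denote the maximum of f over sets of size at most k. Then for any finite set U of size h ≥ k ≥ 1, f(U) ≤ (h/k)·OPT(k). -/

import Mathlib

theorem stmt_6 {V : Type*} [Fintype V] [DecidableEq V]
    (f : Finset V → ℝ)
    (hmono : ∀ S T : Finset V, S ⊆ T → f S ≤ f T)
    (hsub : ∀ S T : Finset V, S ⊆ T → ∀ i ∉ T,
      f (insert i T) - f T ≤ f (insert i S) - f S)
    (hempty : f ∅ = 0)
    (k : ℕ) (hk : 1 ≤ k)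
    (OPT : ℝ)
    (hOPT : IsGreatest {x : ℝ | ∃ S : Finset V, S.card ≤ k ∧ f S = x} OPT)
    (U : Finset V) (h : ℕ) (hU : U.card = h) (hkh : k ≤ h) :
    f U ≤ ((h : ℝ) / (k : ℝ)) * OPT := by
  have hfU0 : 0 ≤ f U := by
    have := hmono ∅ U (Finset.empty_subset U); linarith [hempty ▸ this]
  -- telescoping lemma
  have tele : ∀ (D S : Finset V), Disjoint S D →
      f (S ∪ D) - f S ≤ ∑ u ∈ D, (f (insert u S) - f S) := by
    intro D
    induction D using Finset.induction_on with
    | empty => intro S _; simp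
    | @insert a D ha ih =>
      intro S hdisj
      have haS : a ∉ S := fun hx =>
        (Finset.disjoint_left.mp hdisj hx (Finset.mem_insert_self a D))
      have haSD : a ∉ S ∪ D := by simp [haS, ha]
      have hdisj' : Disjoint S D := hdisj.mono_right (Finset.subset_insert a D)
      have h1 : f (insert a (S ∪ D)) - f (S ∪ D) ≤ f (insert a S) - f S :=
        hsub S (S ∪ D) Finset.subset_union_left a haSD
      have h2 := ih S hdisj'
      have he : S ∪ insert a D = insert a (S ∪ D) := Finset.union_insert a S D
      rw [he, Finset.sum_insert ha]
      linarith
  have key : ∀ j, j ≤ h → ∃ G : Finset V, G ⊆ U ∧ G.card = j ∧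
      (f U - f G) * (h : ℝ) ≤ f U * ((h : ℝ) - j) := by
    intro j
    induction j with
    | zero =>
      intro _
      exact ⟨∅, Finset.empty_subset U, Finset.card_empty, by simp [hempty]⟩
    | succ j ih =>
      intro hj1
      obtain ⟨G, hGU, hGcard, hGineq⟩ := ih (Nat.le_of_succ_le hj1)
      have hjh : j ≤ h := Nat.le_of_succ_le hj1
      have hcard : (U \ G).card = h - j := by
        rw [Finset.card_sdiff_of_subset hGU, hU, hGcard]
      have hne : (U \ G).Nonempty := by
        rw [← Finset.card_pos, hcard]; omega
      obtain ⟨u, huUG, hmax⟩ :=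
        Finset.exists_max_image (U \ G) (fun u => f (insert u G) - f G) hne
      have huU : u ∈ U := (Finset.mem_sdiff.mp huUG).1
      have huG : u ∉ G := (Finset.mem_sdiff.mp huUG).2
      set g := f (insert u G) - f G with hg
      have hg0 : 0 ≤ g := by
        have := hmono G (insert u G) (Finset.subset_insert u G); linarith
      have hsum : f U - f G ≤ ∑ v ∈ U \ G, (f (insert v G) - f G) := by
        have := tele (U \ G) G Finset.disjoint_sdiff
        rwa [Finset.union_sdiff_of_subset hGU] at this
      have hsum2 : ∑ v ∈ U \ G, (f (insert v G) - f G) ≤ ((h - j : ℕ) : ℝ) * g := by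
        have := Finset.sum_le_card_nsmul (U \ G) (fun v => f (insert v G) - f G) g
          (fun v hv => hmax v hv)
        rw [hcard] at this
        simpa [nsmul_eq_mul] using this
      have hcast : ((h - j : ℕ) : ℝ) = (h : ℝ) - j := by
        rw [Nat.cast_sub hjh]
      have hdg : f U - f G ≤ ((h : ℝ) - j) * g := by
        rw [← hcast]; linarith
      have ha1 : (1 : ℝ) ≤ (h : ℝ) - j := by
        have : (j : ℝ) + 1 ≤ (h : ℝ) := by exact_mod_cast hj1
        linarith
      have hh0 : (0 : ℝ) ≤ (h : ℝ) := Nat.cast_nonneg h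
      have hfG : f G ≤ f U := hmono G U hGU
      refine ⟨insert u G, Finset.insert_subset huU hGU,
        by rw [Finset.card_insert_of_notMem huG, hGcard], ?_⟩
      have hfins : f (insert u G) = f G + g := by rw [hg]; ring
      rw [hfins]
      push_cast
      -- goal: (f U - (f G + g)) * h ≤ f U * (h - (j+1))
      have ha0 : (0 : ℝ) < (h : ℝ) - j := by linarith
      rw [← mul_le_mul_iff_of_pos_right ha0]
      nlinarith [mul_le_mul_of_nonneg_right hGineq (by linarith : (0:ℝ) ≤ (h:ℝ) - j - 1),
        mul_le_mul_of_nonneg_right hdg hh0]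
  obtain ⟨G, hGU, hGk, hineq⟩ := key k hkh
  have hfGOPT : f G ≤ OPT := hOPT.2 ⟨G, le_of_eq hGk, rfl⟩
  have hk0 : (0 : ℝ) < (k : ℝ) := by exact_mod_cast hk
  have hh0 : (0 : ℝ) ≤ (h : ℝ) := Nat.cast_nonneg h
  rw [div_mul_eq_mul_div, le_div_iff₀ hk0]
  have := mul_le_mul_of_nonneg_right hfGOPT hh0
  nlinarith
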